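/- Let λ₁,…,λ_L : [0,1] → 𝕋 be continuous functions into the unit circle and let k be an integer. Then there exist continuous functions F₁,…,F_L : [0,1] → ℝ such that F₁(0)+⋯+F_L(0) ∈ [k, k+1), such that for every t ∈ [0,1] one has F₁(t) ≤ F₂(t) ≤ ⋯ ≤ F_L(t) ≤ F₁(t) + 1, and such that for every t ∈ [0,1] the unordered L-tuple (λ₁(t),…,λ_L(t)) equals the unordered L-tuple (e^{2πiF₁(t)},…,e^{2πiF_L(t)}). -/

import Mathlib

open Complex Real Set

local notation "II" => Set.Icc (0:ℝ) 1

lemma exists_lift (γ : II → ℂ) (hc : Continuous γ) (h1 : ∀ t, ‖γ t‖ = 1) :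
    ∃ f : II → ℝ, Continuous f ∧ ∀ t, γ t = Complex.exp (2 * π * Complex.I * (f t)) := by
  have hne : ∀ t, γ t ≠ 0 := fun t => by
    intro h; have := h1 t; rw [h] at this; simp at this
  -- uniform continuity
  obtain ⟨δ, hδ, hd⟩ := Metric.uniformContinuous_iff.mp
    (CompactSpace.uniformContinuous_of_continuous hc) 1 one_pos
  obtain ⟨n, hn⟩ := exists_nat_one_div_lt hδ
  set N : ℕ := n + 1 with hN
  have hNpos : (0:ℝ) < N := by positivity
  -- partition points
  have amem : ∀ i : ℕ, min ((i:ℝ) / N) 1 ∈ II := fun i =>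
    ⟨le_min (by positivity) zero_le_one, min_le_right _ _⟩
  set a : ℕ → II := fun i => ⟨min ((i:ℝ) / N) 1, amem i⟩ with ha
  have mmem : ∀ (i : ℕ) (t : II), min t.1 (a i).1 ∈ II := fun i t =>
    ⟨le_min t.2.1 (a i).2.1, min_le_of_left_le t.2.2⟩
  set m : ℕ → II → II := fun i t => ⟨min t.1 (a i).1, mmem i t⟩ with hm
  have hm0 : ∀ t, m 0 t = a 0 := by
    intro t
    have : (a 0).1 = 0 := by simp [ha]
    apply Subtype.ext
    simp [hm, this, t.2.1]
  have hmN : ∀ t, m N t = t := by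
    intro t
    have : (a N).1 = 1 := by
      simp [ha, div_self (ne_of_gt hNpos)]
    apply Subtype.ext
    simp [hm, this, t.2.2]
  -- distance between consecutive midpoints
  have hdist : ∀ (i : ℕ) (t : II), dist (m (i+1) t) (m i t) < δ := by
    intro i t
    rw [Subtype.dist_eq, Real.dist_eq]
    have h1' : (a i).1 ≤ (a (i+1)).1 := by
      simp only [ha]
      push_cast
      gcongr
      linarith
    have h2' : (a (i+1)).1 ≤ (a i).1 + 1 / N := by
      simp only [ha]
      rcases le_total ((i:ℝ)/N) 1 with h | h
      · rw [min_eq_left h]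
        have hcast : ((i+1:ℕ):ℝ)/N = (i:ℝ)/N + 1/N := by push_cast; ring
        exact le_trans (min_le_left _ _) (le_of_eq hcast)
      · rw [min_eq_right h]
        have h0 : (0:ℝ) ≤ 1/N := by positivity
        exact le_trans (min_le_right _ _) (by linarith)
    have hml : (m i t).1 ≤ (m (i+1) t).1 := min_le_min le_rfl h1'
    have hmu : (m (i+1) t).1 ≤ (m i t).1 + 1/N := by
      simp only [hm]
      rcases le_total t.1 (a i).1 with h | h
      · have hh : min t.1 (a (i+1)).1 ≤ t.1 := min_le_left _ _
        have h0 : (0:ℝ) ≤ 1/N := by positivity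
        rw [min_eq_left h]; linarith
      · rw [min_eq_right h]
        exact le_trans (min_le_right _ _) h2'
    rw [abs_sub_lt_iff]
    constructor
    · have : 1/(N:ℝ) < δ := by rw [hN]; push_cast; exact hn
      linarith
    · linarith
  set ρ : ℕ → II → ℂ := fun i t => γ (m (i+1) t) / γ (m i t) with hρ
  have hratio : ∀ (i : ℕ) (t : II),
      ‖ρ i t - 1‖ < 1 := by
    intro i t
    have := hd (hdist i t)
    rw [Complex.dist_eq] at this
    have habs : ‖γ (m i t)‖ = 1 := h1 _
    calc ‖ρ i t - 1‖
        = ‖(γ (m (i+1) t) - γ (m i t)) / γ (m i t)‖ := by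
          congr 1
          rw [hρ]
          rw [sub_div, div_self (hne (m i t))]
      _ = ‖γ (m (i+1) t) - γ (m i t)‖ := by
          rw [norm_div, habs, div_one]
      _ < 1 := this
  have hre : ∀ (i : ℕ) (t : II), 0 < (ρ i t).re := by
    intro i t
    have h := hratio i t
    have h3 : |(ρ i t).re - 1| ≤ ‖ρ i t - 1‖ := by
      simpa using Complex.abs_re_le_norm (ρ i t - 1)
    have h2 : |(ρ i t).re - 1| < 1 := lt_of_le_of_lt h3 h
    rw [abs_sub_lt_iff] at h2
    linarith [h2.2]
  have hρabs : ∀ (i : ℕ) (t : II), ‖ρ i t‖ = 1 := by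
    intro i t
    rw [hρ]
    simp only [norm_div, h1, div_one]
  -- continuity of pieces
  have hmc : ∀ i : ℕ, Continuous (m i) := by
    intro i
    apply Continuous.subtype_mk
    exact (continuous_subtype_val).min continuous_const
  have hρc : ∀ i : ℕ, Continuous (ρ i) := fun i =>
    ((hc.comp (hmc (i+1))).div (hc.comp (hmc i))) (fun t => hne _)
  have hargc : ∀ i : ℕ, Continuous (fun t => Complex.arg (ρ i t)) := by
    intro i
    rw [continuous_iff_continuousAt]
    intro t
    exact (Complex.continuousAt_arg (Complex.mem_slitPlane_iff.2 (Or.inl (hre i t)))).comp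
      (hρc i).continuousAt
  refine ⟨fun t => Complex.arg (γ (a 0)) / (2*π) +
      ∑ i ∈ Finset.range N, Complex.arg (ρ i t) / (2*π), ?_, ?_⟩
  · apply Continuous.add continuous_const
    apply continuous_finset_sum
    intro i _
    exact (hargc i).div_const _
  · intro t
    have hπ : (2*π:ℂ) ≠ 0 := by
      simp [Real.pi_ne_zero, Complex.ext_iff]
    have key : (2 * (π:ℂ) * Complex.I) * ((Complex.arg (γ (a 0)) / (2*π) +
        ∑ i ∈ Finset.range N, Complex.arg (ρ i t) / (2*π) : ℝ) : ℂ)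
        = Complex.arg (γ (a 0)) * Complex.I +
          ∑ i ∈ Finset.range N, (Complex.arg (ρ i t) * Complex.I) := by
      push_cast
      rw [← Finset.sum_mul, ← Finset.sum_div]
      field_simp
    rw [key, Complex.exp_add, Complex.exp_sum]
    have hexparg : ∀ z : ℂ, ‖z‖ = 1 → Complex.exp (Complex.arg z * Complex.I) = z := by
      intro z hz
      have := Complex.norm_mul_exp_arg_mul_I z
      rw [hz] at this; simpa using this
    rw [hexparg _ (h1 (a 0))]
    have hprod : ∀ K : ℕ, ∏ i ∈ Finset.range K, ρ i t = γ (m K t) / γ (m 0 t) := by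
      intro K
      induction K with
      | zero => simp [div_self (hne (m 0 t))]
      | succ K ih =>
        rw [Finset.prod_range_succ, ih]
        have hK := hne (m K t)
        have h0 := hne (m 0 t)
        show γ (m K t) / γ (m 0 t) * (γ (m (K+1) t) / γ (m K t)) = _
        field_simp
    have : ∏ i ∈ Finset.range N, Complex.exp (Complex.arg (ρ i t) * Complex.I)
        = γ t / γ (a 0) := by
      rw [Finset.prod_congr rfl (fun i _ => hexparg _ (hρabs i t)), hprod N, hmN, hm0]
    rw [this]
    rw [mul_div_assoc']
    exact (mul_div_cancel_left₀ _ (hne (a 0))).symm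


open Finset

variable {L : ℕ}

noncomputable def Nf (f : Fin L → ℝ) (x : ℝ) : ℤ := ∑ j, ⌊x - f j⌋

noncomputable def qu (f : Fin L → ℝ) (m : ℤ) : ℝ := sInf {x | m ≤ Nf f x}

lemma Nf_mono (f : Fin L → ℝ) {x y : ℝ} (h : x ≤ y) : Nf f x ≤ Nf f y :=
  Finset.sum_le_sum fun j _ => Int.floor_le_floor (by linarith)

lemma Nf_add_int (f : Fin L → ℝ) (x : ℝ) (d : ℤ) : Nf f (x + d) = Nf f x + L * d := by
  unfold Nf
  have : ∀ j : Fin L, ⌊x + (d:ℝ) - f j⌋ = ⌊x - f j⌋ + d := by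
    intro j
    rw [show x + (d:ℝ) - f j = x - f j + d by ring, Int.floor_add_intCast]
  rw [Finset.sum_congr rfl fun j _ => this j, Finset.sum_add_distrib]
  simp [mul_comm]

lemma Nf_set_nonempty (hL : 0 < L) (f : Fin L → ℝ) (m : ℤ) :
    {x | m ≤ Nf f x}.Nonempty := by
  set B : ℝ := ∑ j, |f j| with hB
  refine ⟨B + |m|, ?_⟩
  have hterm : ∀ j : Fin L, (|m| : ℤ) ≤ ⌊B + |m| - f j⌋ := by
    intro j
    apply Int.le_floor.2
    have h1 : f j ≤ B := by
      calc f j ≤ |f j| := le_abs_self _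
        _ ≤ B := Finset.single_le_sum (fun i _ => abs_nonneg (f i)) (mem_univ j)
    push_cast
    linarith
  have : (L : ℤ) * |m| ≤ Nf f (B + |m|) := by
    unfold Nf
    calc (L:ℤ) * |m| = ∑ _j : Fin L, |m| := by simp [mul_comm]
      _ ≤ _ := Finset.sum_le_sum fun j _ => hterm j
  have hLm : (m:ℤ) ≤ (L:ℤ) * |m| := by
    have h1 : (1:ℤ) ≤ (L:ℤ) := by exact_mod_cast hL
    nlinarith [abs_nonneg m, le_abs_self m]
  simp only [Set.mem_setOf_eq]
  omega

lemma Nf_set_bddBelow (hL : 0 < L) (f : Fin L → ℝ) (m : ℤ) :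
    BddBelow {x | m ≤ Nf f x} := by
  set B : ℝ := ∑ j, |f j| with hB
  refine ⟨-B - |m| - 1, fun x hx => ?_⟩
  by_contra hc
  push_neg at hc
  have hterm : ∀ j : Fin L, ⌊x - f j⌋ ≤ -|m| - 1 := by
    intro j
    have h1 : -B ≤ f j := by
      have : |f j| ≤ B := Finset.single_le_sum (fun i _ => abs_nonneg (f i)) (mem_univ j)
      have := neg_abs_le (f j)
      linarith
    have h2 : x - f j < ((-|m| - 1 + 1 : ℤ) : ℝ) := by
      push_cast [Int.cast_abs] at hc ⊢
      linarith
    have := Int.floor_lt.2 h2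
    omega
  have hsum : Nf f x ≤ (L:ℤ) * (-|m| - 1) := by
    unfold Nf
    calc ∑ j, ⌊x - f j⌋ ≤ ∑ _j : Fin L, (-|m| - 1) := Finset.sum_le_sum fun j _ => hterm j
      _ = (L:ℤ) * (-|m| - 1) := by simp [mul_comm]; ring
  have hx' : m ≤ Nf f x := hx
  have h1 : (1:ℤ) ≤ (L:ℤ) := by exact_mod_cast hL
  nlinarith [abs_nonneg m, neg_abs_le m]

lemma Nf_right_const (hL : 0 < L) (f : Fin L → ℝ) (c : ℝ) :
    ∃ δ > 0, ∀ x, c ≤ x → x < c + δ → Nf f x = Nf f c := by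
  have hne : (univ : Finset (Fin L)).Nonempty := univ_nonempty_iff.2 (Fin.pos_iff_nonempty.1 hL)
  set T : Finset ℝ := univ.image (fun j => (⌊c - f j⌋ : ℝ) + 1 - (c - f j)) with hT
  have hTne : T.Nonempty := hne.image _
  refine ⟨T.min' hTne, ?_, ?_⟩
  · rcases Finset.mem_image.1 (T.min'_mem hTne) with ⟨j, _, hj⟩
    rw [← hj]
    have := Int.lt_floor_add_one (c - f j)
    linarith
  · intro x hcx hxd
    unfold Nf
    apply Finset.sum_congr rfl
    intro j _
    have hmem : (⌊c - f j⌋ : ℝ) + 1 - (c - f j) ∈ T := Finset.mem_image.2 ⟨j, mem_univ j, rfl⟩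
    have hle := Finset.min'_le T _ hmem
    apply Int.floor_eq_iff.2
    constructor
    · have := Int.floor_le (c - f j); push_cast; linarith
    · push_cast; linarith

lemma qu_mem (hL : 0 < L) (f : Fin L → ℝ) (m : ℤ) : m ≤ Nf f (qu f m) := by
  obtain ⟨δ, hδ, hconst⟩ := Nf_right_const hL f (qu f m)
  have hne := Nf_set_nonempty hL f m
  have hbdd := Nf_set_bddBelow hL f m
  have : sInf {x | m ≤ Nf f x} < qu f m + δ := by
    unfold qu; linarith [hδ]
  obtain ⟨x, hx, hxlt⟩ := (csInf_lt_iff hbdd hne).1 this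
  have hge : qu f m ≤ x := csInf_le hbdd hx
  rw [← hconst x hge hxlt]
  exact hx

lemma qu_le_iff (hL : 0 < L) (f : Fin L → ℝ) (m : ℤ) (x : ℝ) :
    qu f m ≤ x ↔ m ≤ Nf f x := by
  constructor
  · intro h
    exact le_trans (qu_mem hL f m) (Nf_mono f h)
  · intro h
    exact csInf_le (Nf_set_bddBelow hL f m) h

lemma qu_mono (hL : 0 < L) (f : Fin L → ℝ) {m m' : ℤ} (h : m ≤ m') :
    qu f m ≤ qu f m' :=
  (qu_le_iff hL f m _).2 (le_trans h (qu_mem hL f m'))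

lemma qu_add_mul (hL : 0 < L) (f : Fin L → ℝ) (m d : ℤ) :
    qu f (m + L * d) = qu f m + d := by
  have h1 : qu f (m + L * d) ≤ qu f m + d := by
    rw [qu_le_iff hL, Nf_add_int]
    exact add_le_add_left (qu_mem hL f m) _
  have h2 : qu f m ≤ qu f (m + L * d) - d := by
    rw [qu_le_iff hL]
    have : Nf f (qu f (m + L*d) - d) = Nf f (qu f (m + L*d)) - L * d := by
      have := Nf_add_int f (qu f (m + L*d) - d) d
      push_cast at this ⊢
      rw [sub_add_cancel] at this
      omega
    rw [this]
    have := qu_mem hL f (m + L*d)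
    omega
  linarith

lemma qu_lip (hL : 0 < L) (f f' : Fin L → ℝ) (m : ℤ) (ε : ℝ)
    (h : ∀ j, |f j - f' j| ≤ ε) : qu f' m ≤ qu f m + ε := by
  rw [qu_le_iff hL]
  refine le_trans (qu_mem hL f m) (Finset.sum_le_sum fun j _ => ?_)
  apply Int.floor_le_floor
  have := abs_le.1 (h j)
  linarith [this.2]


lemma window (hL : 0 < L) (f : Fin L → ℝ) (c : ℝ) (hc : ∀ (j : Fin L) (n : ℤ), c ≠ f j + n)
    (g : Fin L → ℝ) (hgdef : ∀ j, g j = f j - ⌊f j - c⌋) :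
    ∀ i : Fin L, qu f (Nf f c + i + 1) = g (Tuple.sort g i) := by
  have hgl : ∀ j, c < g j := by
    intro j
    rw [hgdef]
    have h1 := Int.floor_le (f j - c)
    rcases lt_or_eq_of_le h1 with h | h
    · linarith
    · exfalso
      exact hc j (-⌊f j - c⌋) (by push_cast; linarith)
  have hgu : ∀ j, g j < c + 1 := by
    intro j
    rw [hgdef]
    have := Int.lt_floor_add_one (f j - c)
    linarith
  -- counting formula
  have hcount : ∀ x, c ≤ x → x < c + 1 →
      Nf f x = Nf f c + ((univ : Finset (Fin L)).filter (fun j => g j ≤ x)).card := by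
    intro x hcx hxc
    have hterm : ∀ j : Fin L, ⌊x - f j⌋ = ⌊c - f j⌋ + (if g j ≤ x then 1 else 0) := by
      intro j
      set n : ℤ := ⌊f j - c⌋ with hn
      have hg1 : c < f j - n := by have := hgl j; rw [hgdef] at this; exact this
      have hg2 : f j - n < c + 1 := by have := hgu j; rw [hgdef] at this; exact this
      have hfloorc : ⌊c - f j⌋ = -n - 1 := by
        apply Int.floor_eq_iff.2
        constructor
        · push_cast; linarith
        · push_cast; linarith
      rw [hfloorc]
      by_cases h : g j ≤ x
      · rw [if_pos h]
        rw [hgdef] at h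
        apply Int.floor_eq_iff.2
        constructor
        · push_cast; linarith
        · push_cast; linarith
      · rw [if_neg h]
        push_neg at h
        rw [hgdef] at h
        apply Int.floor_eq_iff.2
        constructor
        · push_cast; linarith
        · push_cast; linarith
    unfold Nf
    rw [Finset.sum_congr rfl fun j _ => hterm j, Finset.sum_add_distrib, Finset.sum_boole]
  intro i
  set m : ℤ := Nf f c + i + 1 with hm
  have hmono := Tuple.monotone_sort g
  set σ : Equiv.Perm (Fin L) := Tuple.sort g with hσ
  have hle : qu f m ≤ g (σ i) := by
    rw [qu_le_iff hL]
    rw [hcount (g (σ i)) (hgl _).le (hgu _)]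
    have hsub : (Finset.Iic i).image σ ⊆ (univ : Finset (Fin L)).filter (fun j => g j ≤ g (σ i)) := by
      intro j hj
      rcases Finset.mem_image.1 hj with ⟨k, hk, rfl⟩
      refine Finset.mem_filter.2 ⟨mem_univ _, ?_⟩
      exact hmono (Finset.mem_Iic.1 hk)
    have hcard : (i:ℕ) + 1 ≤ ((univ : Finset (Fin L)).filter (fun j => g j ≤ g (σ i))).card := by
      calc (i:ℕ) + 1 = (Finset.Iic i).card := (Fin.card_Iic i).symm
        _ = ((Finset.Iic i).image σ).card := (Finset.card_image_of_injective _ σ.injective).symm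
        _ ≤ _ := Finset.card_le_card hsub
    rw [hm]
    push_cast
    omega
  have hge : g (σ i) ≤ qu f m := by
    apply le_csInf (Nf_set_nonempty hL f m)
    intro x hx
    have hx' : m ≤ Nf f x := hx
    by_contra hcon
    push_neg at hcon
    rcases lt_or_ge x c with h | h
    · have := Nf_mono f h.le
      rw [hm] at hx'
      omega
    · have hxc1 : x < c + 1 := lt_trans hcon (hgu _)
      rw [hcount x h hxc1] at hx'
      have hsub : (univ : Finset (Fin L)).filter (fun j => g j ≤ x) ⊆ (Finset.Iio i).image σ := by
        intro j hj
        have hjx : g j ≤ x := (Finset.mem_filter.1 hj).2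
        refine Finset.mem_image.2 ⟨σ.symm j, ?_, by simp⟩
        rw [Finset.mem_Iio]
        by_contra hik
        push_neg at hik
        have : g (σ i) ≤ g (σ (σ.symm j)) := hmono hik
        simp at this
        linarith
      have hcard : ((univ : Finset (Fin L)).filter (fun j => g j ≤ x)).card ≤ (i:ℕ) := by
        calc _ ≤ ((Finset.Iio i).image σ).card := Finset.card_le_card hsub
          _ = (Finset.Iio i).card := Finset.card_image_of_injective _ σ.injective
          _ = (i:ℕ) := Fin.card_Iio i
      rw [hm] at hx'
      push_cast at hx'
      omega
  linarith

lemma qu_continuous (hL : 0 < L) {X : Type*} [TopologicalSpace X] (f : Fin L → X → ℝ)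
    (hf : ∀ j, Continuous (f j)) (m : ℤ) :
    Continuous (fun t => qu (fun j => f j t) m) := by
  rw [continuous_iff_continuousAt]
  intro t0
  rw [ContinuousAt, Metric.tendsto_nhds]
  intro ε hε
  have hj : ∀ j : Fin L, ∀ᶠ t in nhds t0, dist (f j t) (f j t0) < ε/2 := by
    intro j
    exact Metric.tendsto_nhds.1 (hf j).continuousAt (ε/2) (by positivity)
  filter_upwards [Filter.eventually_all.2 hj] with t ht
  rw [Real.dist_eq, abs_sub_lt_iff]
  have h1 : qu (fun j => f j t) m ≤ qu (fun j => f j t0) m + ε/2 := by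
    apply qu_lip hL
    intro j
    rw [← Real.dist_eq]
    exact (dist_comm (f j t0) (f j t) ▸ (ht j).le)
  have h2 : qu (fun j => f j t0) m ≤ qu (fun j => f j t) m + ε/2 := by
    apply qu_lip hL
    intro j
    rw [← Real.dist_eq]
    exact (ht j).le
  constructor <;> linarith

lemma exists_c (f : Fin L → ℝ) : ∃ c : ℝ, ∀ (j : Fin L) (n : ℤ), c ≠ f j + n := by
  set T : Finset ℝ := univ.image (fun j => Int.fract (f j)) with hT
  obtain ⟨c, hc1, hc2⟩ := (Set.Ico_infinite (zero_lt_one (α := ℝ))).exists_notMem_finset T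
  refine ⟨c, fun j n h => hc2 ?_⟩
  have h1 : Int.fract c = c := Int.fract_eq_self.2 ⟨hc1.1, hc1.2⟩
  have h2 : Int.fract (f j) = c := by
    rw [← h1, h, Int.fract_add_intCast]
  exact Finset.mem_image.2 ⟨j, mem_univ j, h2⟩


/-- simultaneous continuous ordered real lifts of finitely many
continuous circle-valued functions on `[0,1]`, normalized so that the sum of
the values at `0` lies in `[k, k+1)`. -/
theorem stmt_3 (L : ℕ) (hL : 0 < L) (k : ℤ)
    (lam : Fin L → (Set.Icc (0:ℝ) 1) → ℂ)
    (hcont : ∀ j, Continuous (lam j))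
    (hunit : ∀ j t, ‖lam j t‖ = 1) :
    ∃ F : Fin L → (Set.Icc (0:ℝ) 1) → ℝ,
      (∀ j, Continuous (F j)) ∧
      (∑ j, F j ⟨0, Set.mem_Icc.mpr ⟨le_refl 0, zero_le_one⟩⟩) ∈
        Set.Ico (k : ℝ) ((k : ℝ) + 1) ∧
      (∀ t, ∀ j j' : Fin L, j ≤ j' → F j t ≤ F j' t) ∧
      (∀ t j, F j t ≤ F ⟨0, hL⟩ t + 1) ∧
      (∀ t, ∃ σ : Equiv.Perm (Fin L), ∀ j,
        lam j t = Complex.exp (2 * Real.pi * Complex.I * (F (σ j) t : ℂ))) := by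
  haveI : NeZero L := ⟨hL.ne'⟩
  choose f hfc hfe using fun j => exists_lift (lam j) (hcont j) (hunit j)
  set t0 : Set.Icc (0:ℝ) 1 := ⟨0, Set.mem_Icc.mpr ⟨le_refl 0, zero_le_one⟩⟩ with ht0
  set X : ℤ → (Set.Icc (0:ℝ) 1) → ℝ := fun m t => qu (fun j => f j t) m with hX
  have hXcont : ∀ m, Continuous (X m) := fun m => qu_continuous hL f hfc m
  have hXmono : ∀ (t) {m m'}, m ≤ m' → X m t ≤ X m' t := fun t _ _ h => qu_mono hL _ h
  have hXadd : ∀ t m d, X (m + L*d) t = X m t + d := fun t m d => qu_add_mul hL _ m d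
  set S : ℤ → ℝ := fun m => ∑ i ∈ Finset.range L, X (m + 1 + i) t0 with hS
  have hstep : ∀ m : ℤ, S (m+1) = S m + 1 := by
    intro m
    have h1 : ∑ i ∈ Finset.range (L+1), X (m + 1 + i) t0
        = S m + X (m + 1 + L) t0 := by
      rw [Finset.sum_range_succ]
    have h2 : ∑ i ∈ Finset.range (L+1), X (m + 1 + i) t0
        = S (m+1) + X (m + 1 + 0) t0 := by
      rw [Finset.sum_range_succ']
      congr 1
      apply Finset.sum_congr rfl
      intro i _
      congr 1
      push_cast
      ring
    have h3 : X (m + 1 + L) t0 = X (m + 1) t0 + 1 := by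
      have := hXadd t0 (m+1) 1
      rw [mul_one] at this
      rw [show m + 1 + (L:ℤ) = m + 1 + L by ring]
      rw [this]
      norm_num
    rw [h1, h3] at h2
    norm_num at h2
    linarith
  have hSlin : ∀ m : ℤ, S m = S 0 + m := by
    intro m
    induction m using Int.induction_on with
    | zero => simp
    | succ i ih => rw [hstep i, ih]; push_cast; ring
    | pred i ih =>
      have := hstep (-(i:ℤ) - 1)
      rw [show -(i:ℤ) - 1 + 1 = -(i:ℤ) by ring] at this
      rw [show (-(i:ℤ) - 1) = -((i:ℤ)+1) by ring] at this ⊢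
      push_cast at ih ⊢
      linarith
  set m0 : ℤ := k - ⌊S 0⌋ with hm0
  refine ⟨fun j t => X (m0 + 1 + ((j:ℕ):ℤ)) t, fun j => hXcont _, ?_, ?_, ?_, ?_⟩
  · -- sum at 0
    have hsum : ∑ j : Fin L, X (m0 + 1 + ((j:ℕ):ℤ)) t0 = S m0 := by
      rw [hS]
      exact Fin.sum_univ_eq_sum_range (fun i : ℕ => X (m0 + 1 + (i:ℤ)) t0) L
    rw [hsum, hSlin m0, hm0]
    constructor
    · push_cast
      linarith [Int.floor_le (S 0)]
    · push_cast
      linarith [Int.lt_floor_add_one (S 0)]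
  · intro t j j' hjj
    apply hXmono
    have : (j:ℕ) ≤ (j':ℕ) := hjj
    omega
  · intro t j
    have h0 : ((⟨0, hL⟩ : Fin L) : ℕ) = 0 := rfl
    have h4 := hXadd t (m0 + 1 + 0) 1
    have h5 : X (m0 + 1 + ((j:ℕ):ℤ)) t ≤ X (m0 + 1 + 0 + L*1) t := by
      apply hXmono
      have := j.2
      omega
    rw [h4] at h5
    push_cast at h5
    simpa [h0] using h5
  · intro t
    obtain ⟨c, hc⟩ := exists_c (fun j => f j t)
    set fv : Fin L → ℝ := fun j => f j t with hfv
    set g : Fin L → ℝ := fun j => fv j - ⌊fv j - c⌋ with hg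
    have hw := window hL fv c hc g (fun j => rfl)
    set σs : Equiv.Perm (Fin L) := Tuple.sort g with hσs
    set Nc : ℤ := Nf fv c with hNc
    set dF : Fin L := ⟨((Nc - m0) % L).toNat, by
      have h1 : 0 ≤ (Nc - m0) % L := Int.emod_nonneg _ (by exact_mod_cast hL.ne')
      have h2 : (Nc - m0) % L < L := Int.emod_lt_of_pos _ (by exact_mod_cast hL)
      omega⟩ with hdF
    refine ⟨σs.symm.trans (Equiv.addRight dF), ?_⟩
    intro j
    set i : Fin L := σs.symm j with hi
    have hσj : (σs.symm.trans (Equiv.addRight dF)) j = i + dF := rfl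
    have hval : ((i + dF : Fin L) : ℕ) = ((i:ℕ) + (dF:ℕ)) % L := Fin.val_add i dF
    have hdFval : ((dF:ℕ):ℤ) = (Nc - m0) % L := by
      rw [hdF]
      simp only []
      rw [Int.toNat_of_nonneg (Int.emod_nonneg _ (by exact_mod_cast hL.ne'))]
    -- index congruence
    have hdvd : ∃ dd : ℤ, (m0 + 1 + (((i + dF : Fin L) : ℕ):ℤ)) = (Nc + ((i:ℕ):ℤ) + 1) + L * dd := by
      have hcast : (((i + dF : Fin L) : ℕ):ℤ) = (((i:ℕ):ℤ) + ((dF:ℕ):ℤ)) % L := by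
        rw [hval]; push_cast; rfl
      have hmod1 : (((i:ℕ):ℤ) + ((dF:ℕ):ℤ)) % L ≡ ((i:ℕ):ℤ) + ((dF:ℕ):ℤ) [ZMOD (L:ℤ)] :=
        Int.mod_modEq _ _
      have hmod2 : ((i:ℕ):ℤ) + ((dF:ℕ):ℤ) ≡ ((i:ℕ):ℤ) + (Nc - m0) [ZMOD (L:ℤ)] := by
        apply Int.ModEq.add_left
        rw [hdFval]
        exact Int.mod_modEq _ _
      have hmod3 : (((i + dF : Fin L) : ℕ):ℤ) ≡ ((i:ℕ):ℤ) + (Nc - m0) [ZMOD (L:ℤ)] := by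
        rw [hcast]; exact hmod1.trans hmod2
      have hmod4 : (m0 + 1 + (((i + dF : Fin L) : ℕ):ℤ)) ≡ (Nc + ((i:ℕ):ℤ) + 1) [ZMOD (L:ℤ)] := by
        have := (Int.ModEq.refl (m0 + 1)).add hmod3
        refine this.trans ?_
        rw [show m0 + 1 + (((i:ℕ):ℤ) + (Nc - m0)) = Nc + ((i:ℕ):ℤ) + 1 by ring]
      obtain ⟨dd, hdd⟩ := hmod4.symm.dvd
      exact ⟨dd, by linarith⟩
    obtain ⟨dd, hdd⟩ := hdvd
    have hqval : X (m0 + 1 + (((i + dF : Fin L) : ℕ):ℤ)) t = g j + dd := by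
      show qu fv (m0 + 1 + (((i + dF : Fin L) : ℕ):ℤ)) = g j + (dd:ℝ)
      rw [hdd, qu_add_mul hL]
      have h6 := hw i
      have h7 : σs i = j := σs.apply_symm_apply j
      rw [h7] at h6
      rw [h6]
    rw [hσj]
    show lam j t = Complex.exp (2 * Real.pi * Complex.I * ((X (m0 + 1 + (((i + dF : Fin L):ℕ):ℤ)) t : ℝ) : ℂ))
    rw [hqval]
    -- final exponential computation
    rw [hfe j t]
    have hgj : g j = fv j - ⌊fv j - c⌋ := rfl
    rw [hgj]
    push_cast
    rw [show 2 * (Real.pi:ℂ) * Complex.I * (fv j - (⌊fv j - c⌋:ℤ) + dd)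
        = 2 * (Real.pi:ℂ) * Complex.I * (fv j) + ((dd - ⌊fv j - c⌋ : ℤ) : ℂ) * (2 * Real.pi * Complex.I) by push_cast; ring]
    rw [Complex.exp_add, Complex.exp_int_mul_two_pi_mul_I, mul_one]
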